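/- Proximal mapping characterization: for g = ½‖·‖_{F,r*}² (half square of the low-rank inducing Frobenius norm) and any real n×m matrix Z with rank(Z) ≤ r and any γ > 0, prox_{γg}( (1+γ) Z ) = Z. -/

import Mathlib

open Matrix BigOperators Finset

/-- Singular values of a real `n × m` matrix, in nonincreasing order, 0-indexed:
`sv M 0 ≥ sv M 1 ≥ …` are the singular values (square roots of the eigenvalues of `Mᵀ M`). -/
noncomputable def sv {n m : ℕ} (M : Matrix (Fin n) (Fin m) ℝ) (i : ℕ) : ℝ :=
  (((List.ofFn fun j : Fin m =>
      Real.sqrt ((show (Mᵀ * M).IsHermitian by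
        simpa [Matrix.conjTranspose_eq_transpose_of_trivial] using
          Matrix.isHermitian_conjTranspose_mul_self M).eigenvalues j)).mergeSort
      (fun a b => decide (a ≥ b))).getD i 0)

/-- Trace inner product `⟨M, Y⟩ = tr (Mᵀ Y)`. -/
def ip {n m : ℕ} (M Y : Matrix (Fin n) (Fin m) ℝ) : ℝ := ∑ i, ∑ j, M i j * Y i j

/-- Frobenius norm. -/
noncomputable def fro {n m : ℕ} (M : Matrix (Fin n) (Fin m) ℝ) : ℝ :=
  Real.sqrt (∑ i, ∑ j, M i j ^ 2)

/-- Truncated Frobenius norm `‖M‖_{F,r} = sqrt (σ₁² + ⋯ + σᵣ²)`. -/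
noncomputable def truncFro {n m : ℕ} (r : ℕ) (M : Matrix (Fin n) (Fin m) ℝ) : ℝ :=
  Real.sqrt (∑ i ∈ Finset.range r, sv M i ^ 2)

/-- Dual norm with respect to the trace inner product. -/
noncomputable def dualNorm {n m : ℕ} (ν : Matrix (Fin n) (Fin m) ℝ → ℝ)
    (M : Matrix (Fin n) (Fin m) ℝ) : ℝ :=
  sSup {c : ℝ | ∃ Y, ν Y ≤ 1 ∧ c = ip M Y}

/-- Low-rank inducing Frobenius norm `‖·‖_{F,r*}`, the dual of `‖·‖_{F,r}`. -/
noncomputable def lowRankFro {n m : ℕ} (r : ℕ) (M : Matrix (Fin n) (Fin m) ℝ) : ℝ :=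
  dualNorm (truncFro r) M

/-- Ky Fan `r`-norm: sum of the `r` largest singular values. -/
noncomputable def kyFan {n m : ℕ} (r : ℕ) (M : Matrix (Fin n) (Fin m) ℝ) : ℝ :=
  ∑ i ∈ Finset.range r, sv M i

/-- Nuclear norm: sum of all singular values. -/
noncomputable def nuclear {n m : ℕ} (M : Matrix (Fin n) (Fin m) ℝ) : ℝ :=
  ∑ i ∈ Finset.range (min n m), sv M i


lemma Matrix.isHermitian_transpose_mul_self {n m : ℕ} (M : Matrix (Fin n) (Fin m) ℝ) :
    (Mᴴ * M).IsHermitian := by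
  simpa [Matrix.conjTranspose_eq_transpose_of_trivial] using
    Matrix.isHermitian_conjTranspose_mul_self M

section svlemmas

variable {n m : ℕ} (M : Matrix (Fin n) (Fin m) ℝ)
noncomputable def svL : List ℝ :=
  ((List.ofFn fun j : Fin m =>
      Real.sqrt ((Matrix.isHermitian_transpose_mul_self M).eigenvalues j)).mergeSort
      (fun a b => decide (a ≥ b)))
lemma svL_length : (svL M).length = m := by simp [svL, List.length_mergeSort]
lemma sv_eq_getD (i : ℕ) : sv M i = (svL M).getD i 0 := rfl
lemma svL_perm : (svL M).Perm (List.ofFn fun j : Fin m =>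
      Real.sqrt ((Matrix.isHermitian_transpose_mul_self M).eigenvalues j)) :=
  List.mergeSort_perm _ _
lemma svL_sorted : (svL M).Pairwise (fun a b => a ≥ b) := by
  have h := List.pairwise_mergeSort (le := fun a b : ℝ => decide (a ≥ b))
    (fun a b c hab hbc => by simp_all; exact le_trans hbc hab)
    (fun a b => by simpa using le_total b a)
    (List.ofFn fun j : Fin m =>
      Real.sqrt ((Matrix.isHermitian_transpose_mul_self M).eigenvalues j))
  exact h.imp (by simp)
lemma sv_nonneg (i : ℕ) : 0 ≤ sv M i := by
  rw [sv_eq_getD]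
  rcases lt_or_ge i (svL M).length with h | h
  · rw [List.getD_eq_getElem _ _ h]
    have hmem : (svL M)[i] ∈ svL M := List.getElem_mem h
    have := (svL_perm M).mem_iff.mp hmem
    rw [List.mem_ofFn] at this
    obtain ⟨j, hj⟩ := this
    rw [← hj]
    exact Real.sqrt_nonneg _
  · rw [List.getD_eq_default _ _ h]

lemma sv_anti {i j : ℕ} (hij : i ≤ j) : sv M j ≤ sv M i := by
  rcases eq_or_lt_of_le hij with rfl | hij
  · exact le_refl _
  · rcases lt_or_ge j (svL M).length with hj | hj
    · have hi : i < (svL M).length := lt_trans hij hj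
      rw [sv_eq_getD, sv_eq_getD, List.getD_eq_getElem _ _ hj, List.getD_eq_getElem _ _ hi]
      have := List.pairwise_iff_get.mp (svL_sorted M) ⟨i, hi⟩ ⟨j, hj⟩ hij
      simpa using this
    · rw [sv_eq_getD M j, List.getD_eq_default _ _ hj]
      exact sv_nonneg M i

/-- Sum over sorted singular values equals sum over sqrt-eigenvalues. -/
lemma sum_f_sv (f : ℝ → ℝ) :
    ∑ i ∈ Finset.range m, f (sv M i) =
    ∑ j : Fin m, f (Real.sqrt ((Matrix.isHermitian_transpose_mul_self M).eigenvalues j)) := by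
  have h1 : ∀ (L : List ℝ), ∑ i ∈ Finset.range L.length, f (L.getD i 0) = (L.map f).sum := by
    intro L
    induction L with
    | nil => simp
    | cons a t ih =>
      simp only [List.length_cons, Finset.sum_range_succ']
      rw [add_comm]
      simp only [List.getD_cons_zero, List.getD_cons_succ, List.map_cons, List.sum_cons, ih]
  have h2 := h1 (svL M)
  rw [svL_length] at h2
  calc ∑ i ∈ Finset.range m, f (sv M i) = ((svL M).map f).sum := h2
    _ = ((List.ofFn fun j : Fin m =>
      Real.sqrt ((Matrix.isHermitian_transpose_mul_self M).eigenvalues j)).map f).sum :=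
        ((svL_perm M).map f).sum_eq
    _ = _ := by rw [List.map_ofFn, List.sum_ofFn]; rfl
end svlemmas

section eig

variable {n m : ℕ} (M : Matrix (Fin n) (Fin m) ℝ)

lemma eig_nonneg (j : Fin m) : 0 ≤ (Matrix.isHermitian_transpose_mul_self M).eigenvalues j := by
  have h : (Mᵀ * M).PosSemidef := by
    have := Matrix.posSemidef_conjTranspose_mul_self M
    rwa [Matrix.conjTranspose_eq_transpose_of_trivial] at this
  exact h.eigenvalues_nonneg j

lemma sum_eig_eq : ∑ j, (Matrix.isHermitian_transpose_mul_self M).eigenvalues j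
    = ∑ i, ∑ j, M i j ^ 2 := by
  have hA := Matrix.isHermitian_transpose_mul_self M
  have hst := hA.spectral_theorem
  have htr : (Mᴴ * M).trace = ∑ j, hA.eigenvalues j := by
    conv_lhs => rw [hst, Unitary.conjStarAlgAut_apply]
    rw [Matrix.trace_mul_cycle]
    have hu : (star (hA.eigenvectorUnitary : Matrix (Fin m) (Fin m) ℝ)) *
        (hA.eigenvectorUnitary : Matrix (Fin m) (Fin m) ℝ) = 1 :=
      hA.eigenvectorUnitary.2.1
    rw [hu, Matrix.one_mul, Matrix.trace_diagonal]
    simp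
  rw [← htr]
  simp [Matrix.trace, Matrix.diag, Matrix.mul_apply, pow_two]
  exact Finset.sum_comm
end eig

section frolemmas
variable {n m : ℕ} (M : Matrix (Fin n) (Fin m) ℝ)

lemma cs_sum {ι : Type*} (s : Finset ι) (f g : ι → ℝ) :
    ∑ i ∈ s, f i * g i ≤ Real.sqrt (∑ i ∈ s, f i ^ 2) * Real.sqrt (∑ i ∈ s, g i ^ 2) := by
  have h := Finset.sum_mul_sq_le_sq_mul_sq s f g
  have h2 : ∑ i ∈ s, f i * g i ≤ |∑ i ∈ s, f i * g i| := le_abs_self _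
  refine h2.trans ?_
  rw [← Real.sqrt_sq_eq_abs, ← Real.sqrt_mul (by positivity)]
  exact Real.sqrt_le_sqrt h

lemma fro_nonneg : 0 ≤ fro M := Real.sqrt_nonneg _

lemma fro_sq : fro M ^ 2 = ∑ i, ∑ j, M i j ^ 2 := by
  rw [fro, Real.sq_sqrt (by positivity)]

lemma fro_eq_zero (h : fro M = 0) : M = 0 := by
  have h2 : ∑ i, ∑ j, M i j ^ 2 = 0 := by
    have := fro_sq M
    rw [h] at this
    simpa using this.symm
  ext i j
  have hi := (Finset.sum_eq_zero_iff_of_nonneg (fun i _ => by positivity)).mp h2 i (by simp)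
  have hj := (Finset.sum_eq_zero_iff_of_nonneg (fun j _ => by positivity)).mp hi j (by simp)
  simpa using pow_eq_zero_iff (n := 2) (by norm_num) |>.mp hj

lemma sum_sv_sq : ∑ i ∈ Finset.range m, sv M i ^ 2 = fro M ^ 2 := by
  rw [fro_sq, ← sum_eig_eq M, sum_f_sv M (fun x => x ^ 2)]
  exact Finset.sum_congr rfl fun j _ => Real.sq_sqrt (eig_nonneg M j)

lemma truncFro_nonneg (r : ℕ) : 0 ≤ truncFro r M := Real.sqrt_nonneg _

lemma truncFro_sq (r : ℕ) : truncFro r M ^ 2 = ∑ i ∈ Finset.range r, sv M i ^ 2 := by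
  rw [truncFro, Real.sq_sqrt]
  exact Finset.sum_nonneg fun i _ => by positivity

lemma sum_range_sv_sq_le (r : ℕ) :
    ∑ i ∈ Finset.range r, sv M i ^ 2 ≤ fro M ^ 2 := by
  rw [← sum_sv_sq M]
  rcases le_total r m with h | h
  · exact Finset.sum_le_sum_of_subset_of_nonneg (Finset.range_subset_range.mpr h)
      (fun i _ _ => by positivity)
  · refine le_of_eq (Finset.sum_subset (Finset.range_subset_range.mpr h) ?_).symm
    intro i _ hi
    rw [Finset.mem_range, not_lt] at hi
    have : sv M i = 0 := by
      rw [sv_eq_getD, List.getD_eq_default]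
      rw [svL_length]; omega
    simp [this]

lemma truncFro_le_fro (r : ℕ) : truncFro r M ≤ fro M := by
  rw [truncFro, fro]
  apply Real.sqrt_le_sqrt
  have := sum_range_sv_sq_le M r
  rwa [fro_sq] at this

lemma fro_le_sqrt_mul_truncFro {r : ℕ} (hr : 1 ≤ r) :
    fro M ≤ Real.sqrt m * truncFro r M := by
  have h1 : fro M ^ 2 ≤ m * truncFro r M ^ 2 := by
    rw [← sum_sv_sq M, truncFro_sq]
    have hsv0 : ∀ i ∈ Finset.range m, sv M i ^ 2 ≤ sv M 0 ^ 2 := by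
      intro i _
      have := sv_anti M (Nat.zero_le i)
      exact pow_le_pow_left₀ (sv_nonneg M i) this 2
    calc ∑ i ∈ Finset.range m, sv M i ^ 2 ≤ ∑ _i ∈ Finset.range m, sv M 0 ^ 2 :=
          Finset.sum_le_sum hsv0
      _ = m * sv M 0 ^ 2 := by simp [mul_comm]
      _ ≤ m * ∑ i ∈ Finset.range r, sv M i ^ 2 := by
          gcongr
          exact Finset.single_le_sum (f := fun i => sv M i ^ 2)
            (fun i _ => by positivity) (Finset.mem_range.mpr hr)
  calc fro M = Real.sqrt (fro M ^ 2) := (Real.sqrt_sq (fro_nonneg M)).symm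
    _ ≤ Real.sqrt (m * truncFro r M ^ 2) := Real.sqrt_le_sqrt h1
    _ = Real.sqrt m * truncFro r M := by
        rw [Real.sqrt_mul (Nat.cast_nonneg m), Real.sqrt_sq (truncFro_nonneg M r)]

end frolemmas

section stepA
variable {n m : ℕ}

lemma ip_le_fro_mul_fro (M Y : Matrix (Fin n) (Fin m) ℝ) : ip M Y ≤ fro M * fro Y := by
  rw [ip, fro, fro]
  have h := cs_sum (Finset.univ : Finset (Fin n × Fin m))
    (fun p => M p.1 p.2) (fun p => Y p.1 p.2)
  rw [Fintype.sum_prod_type, Fintype.sum_prod_type, Fintype.sum_prod_type] at h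
  exact h

lemma bdd_above_dual (r : ℕ) (hr : 1 ≤ r) (M : Matrix (Fin n) (Fin m) ℝ) :
    BddAbove {c : ℝ | ∃ Y, truncFro r Y ≤ 1 ∧ c = ip M Y} := by
  refine ⟨fro M * Real.sqrt m, fun c hc => ?_⟩
  obtain ⟨Y, hY, rfl⟩ := hc
  calc ip M Y ≤ fro M * fro Y := ip_le_fro_mul_fro M Y
    _ ≤ fro M * (Real.sqrt m * truncFro r Y) := by
        have := fro_le_sqrt_mul_truncFro Y hr
        gcongr
        exact fro_nonneg M
    _ ≤ fro M * (Real.sqrt m * 1) := by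
        have h3 : (0:ℝ) ≤ fro M * Real.sqrt m :=
          mul_nonneg (fro_nonneg M) (Real.sqrt_nonneg _)
        nlinarith [fro_nonneg M, Real.sqrt_nonneg (m:ℝ), truncFro_nonneg Y r]
    _ = fro M * Real.sqrt m := by ring

lemma zero_mem_dual (r : ℕ) (M : Matrix (Fin n) (Fin m) ℝ) :
    (0 : ℝ) ∈ {c : ℝ | ∃ Y, truncFro r Y ≤ 1 ∧ c = ip M Y} := by
  refine ⟨0, ?_, by simp [ip]⟩
  have h1 := truncFro_le_fro (0 : Matrix (Fin n) (Fin m) ℝ) r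
  have h2 : fro (0 : Matrix (Fin n) (Fin m) ℝ) = 0 := by simp [fro]
  rw [h2] at h1
  linarith

lemma fro_le_lowRankFro {r : ℕ} (hr : 1 ≤ r) (M : Matrix (Fin n) (Fin m) ℝ) :
    fro M ≤ lowRankFro r M := by
  rw [lowRankFro, dualNorm]
  by_cases hM : M = 0
  · subst hM
    have h2 : fro (0 : Matrix (Fin n) (Fin m) ℝ) = 0 := by simp [fro]
    rw [h2]
    exact le_csSup (bdd_above_dual r hr 0) (zero_mem_dual r 0)
  · have hfro : 0 < fro M := by
      rcases lt_or_eq_of_le (fro_nonneg M) with h | h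
      · exact h
      · exact absurd (fro_eq_zero M h.symm) hM
    apply le_csSup (bdd_above_dual r hr M)
    refine ⟨(fro M)⁻¹ • M, ?_, ?_⟩
    · have h1 : fro ((fro M)⁻¹ • M) = 1 := by
        rw [fro]
        have : ∀ i j, ((fro M)⁻¹ • M) i j ^ 2 = (fro M)⁻¹ ^ 2 * M i j ^ 2 := by
          intro i j; simp [Matrix.smul_apply]; ring
        simp only [this, ← Finset.mul_sum]
        rw [Real.sqrt_mul (by positivity), Real.sqrt_sq (by positivity)]
        show (fro M)⁻¹ * fro M = 1
        exact inv_mul_cancel₀ hfro.ne'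
      calc truncFro r ((fro M)⁻¹ • M) ≤ fro ((fro M)⁻¹ • M) := truncFro_le_fro _ r
        _ = 1 := h1
    · rw [ip]
      have : ∀ i j, M i j * ((fro M)⁻¹ • M) i j = (fro M)⁻¹ * M i j ^ 2 := by
        intro i j; simp [Matrix.smul_apply]; ring
      simp only [this, ← Finset.mul_sum]
      rw [← fro_sq]
      field_simp

end stepA

section K
variable {n m : ℕ} (Y : Matrix (Fin n) (Fin m) ℝ)

lemma quad_core (x : Fin m → ℝ) :
    ∑ i, (Y *ᵥ x) i ^ 2 = x ⬝ᵥ ((Yᴴ * Y) *ᵥ x) := by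
  have e1 : ∑ i, (Y *ᵥ x) i ^ 2 = (Y *ᵥ x) ⬝ᵥ (Y *ᵥ x) := by
    simp [dotProduct, pow_two]
  rw [e1, dotProduct_mulVec, ← Matrix.mulVec_transpose]
  rw [Matrix.mulVec_mulVec]
  rw [Matrix.conjTranspose_eq_transpose_of_trivial]
  exact dotProduct_comm _ _

lemma dotQ (Q : Matrix (Fin m) (Fin m) ℝ) (x y : Fin m → ℝ) :
    x ⬝ᵥ (Q *ᵥ y) = ((star Q) *ᵥ x) ⬝ᵥ y := by
  rw [dotProduct_mulVec]
  congr 1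
  rw [Matrix.star_eq_conjTranspose, Matrix.conjTranspose_eq_transpose_of_trivial,
    ← Matrix.vecMul_transpose, Matrix.transpose_transpose]

end K

section K2
variable {n m : ℕ} (Y : Matrix (Fin n) (Fin m) ℝ)

noncomputable def lamY := (Matrix.isHermitian_transpose_mul_self Y).eigenvalues
noncomputable def QY : Matrix (Fin m) (Fin m) ℝ :=
  ((Matrix.isHermitian_transpose_mul_self Y).eigenvectorUnitary : Matrix (Fin m) (Fin m) ℝ)

lemma QY_unit1 : star (QY Y) * QY Y = 1 :=
  (Matrix.isHermitian_transpose_mul_self Y).eigenvectorUnitary.2.1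
lemma QY_unit2 : QY Y * star (QY Y) = 1 :=
  (Matrix.isHermitian_transpose_mul_self Y).eigenvectorUnitary.2.2

lemma quadform (x : Fin m → ℝ) :
    ∑ i, (Y *ᵥ x) i ^ 2 = ∑ j, lamY Y j * ((star (QY Y)) *ᵥ x) j ^ 2 := by
  rw [quad_core]
  have hst := (Matrix.isHermitian_transpose_mul_self Y).spectral_theorem
  have : Yᴴ * Y = QY Y * Matrix.diagonal (lamY Y) * star (QY Y) := by
    rw [hst, Unitary.conjStarAlgAut_apply]; rfl
  rw [this]
  rw [← Matrix.mulVec_mulVec, ← Matrix.mulVec_mulVec, dotQ]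
  simp [dotProduct, Matrix.mulVec_diagonal, pow_two]
  exact Finset.sum_congr rfl fun j _ => by ring

lemma dot_starQ (x y : Fin m → ℝ) :
    ((star (QY Y)) *ᵥ x) ⬝ᵥ ((star (QY Y)) *ᵥ y) = x ⬝ᵥ y := by
  rw [← dotQ, Matrix.mulVec_mulVec, QY_unit2, Matrix.one_mulVec]

end K2

section Bessel
variable {m : ℕ}

lemma bessel {ι : Type*} [DecidableEq ι] (s : Finset ι) (w : ι → Fin m → ℝ)
    (hw : ∀ a ∈ s, ∀ b ∈ s, w a ⬝ᵥ w b = if a = b then 1 else 0) (j : Fin m) :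
    ∑ l ∈ s, w l j ^ 2 ≤ 1 := by
  have key : (0:ℝ) ≤ ∑ i, ((Pi.single j 1 : Fin m → ℝ) i - ∑ l ∈ s, w l j * w l i)^2 :=
    Finset.sum_nonneg fun i _ => sq_nonneg _
  have expand : ∑ i, ((Pi.single j 1 : Fin m → ℝ) i - ∑ l ∈ s, w l j * w l i)^2
      = ∑ i, ((Pi.single j 1 : Fin m → ℝ) i ^2 - 2 * ((Pi.single j 1 : Fin m → ℝ) i * (∑ l ∈ s, w l j * w l i))
        + (∑ l ∈ s, w l j * w l i)^2) := Finset.sum_congr rfl fun i _ => by ring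
  have h1 : ∑ i : Fin m, (Pi.single j 1 : Fin m → ℝ) i^2 = 1 := by
    simp [Pi.single_apply, sq]
  have h2 : ∑ i : Fin m, (Pi.single j 1 : Fin m → ℝ) i * (∑ l ∈ s, w l j * w l i)
      = ∑ l ∈ s, w l j ^ 2 := by
    simp only [Pi.single_apply, ite_mul, one_mul, zero_mul]
    rw [Finset.sum_ite_eq' Finset.univ j (fun x => ∑ l ∈ s, w l j * w l x)]
    simp [sq]
  have h3 : ∑ i : Fin m, (∑ l ∈ s, w l j * w l i)^2 = ∑ l ∈ s, w l j ^ 2 := by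
    have e1 : ∀ i : Fin m, (∑ l ∈ s, w l j * w l i)^2
        = ∑ l ∈ s, ∑ l' ∈ s, (w l j * w l i) * (w l' j * w l' i) := by
      intro i; rw [sq, Finset.sum_mul_sum]
    rw [Finset.sum_congr rfl fun i _ => e1 i, Finset.sum_comm]
    have e2 : ∀ l ∈ s, ∑ i : Fin m, ∑ l' ∈ s, (w l j * w l i) * (w l' j * w l' i)
        = ∑ l' ∈ s, (w l j * w l' j) * (w l ⬝ᵥ w l') := by
      intro l _
      rw [Finset.sum_comm]
      refine Finset.sum_congr rfl fun l' _ => ?_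
      rw [dotProduct, Finset.mul_sum]
      exact Finset.sum_congr rfl fun i _ => by ring
    rw [Finset.sum_congr rfl e2]
    refine Finset.sum_congr rfl fun l hl => ?_
    rw [Finset.sum_congr rfl (fun l' hl' => by rw [hw l hl l' hl'])]
    simp only [mul_ite, mul_one, mul_zero]
    rw [Finset.sum_ite_eq s l (fun l' => w l j * w l' j)]
    simp [hl, sq]
  rw [expand, Finset.sum_add_distrib, Finset.sum_sub_distrib, h1, h3, ← Finset.mul_sum, h2] at key
  linarith

end Bessel


section lemK
variable {n m : ℕ}

lemma lemK {r : ℕ} (hr1 : 1 ≤ r) (hrm : r ≤ m) (Y : Matrix (Fin n) (Fin m) ℝ)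
    {ι : Type*} [DecidableEq ι] (s : Finset ι) (v : ι → Fin m → ℝ)
    (hv : ∀ a ∈ s, ∀ b ∈ s, v a ⬝ᵥ v b = if a = b then 1 else 0)
    (hs : s.card ≤ r) :
    ∑ l ∈ s, ∑ i, (Y *ᵥ v l) i ^ 2 ≤ ∑ i ∈ Finset.range r, sv Y i ^ 2 := by
  set lam := lamY Y with hlam
  have hnn : ∀ j, 0 ≤ lam j := fun j => eig_nonneg Y j
  set w : ι → Fin m → ℝ := fun l => (star (QY Y)) *ᵥ v l with hwdef
  have hworth : ∀ a ∈ s, ∀ b ∈ s, w a ⬝ᵥ w b = if a = b then 1 else 0 := by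
    intro a ha b hb
    rw [hwdef]
    simp only []
    rw [dot_starQ]
    exact hv a ha b hb
  set t : Fin m → ℝ := fun j => ∑ l ∈ s, w l j ^ 2 with htdef
  have step1 : ∑ l ∈ s, ∑ i, (Y *ᵥ v l) i ^ 2 = ∑ j, lam j * t j := by
    rw [Finset.sum_congr rfl fun l _ => quadform Y (v l)]
    rw [Finset.sum_comm]
    exact Finset.sum_congr rfl fun j _ => by rw [Finset.mul_sum]
  have ht1 : ∀ j, t j ≤ 1 := fun j => bessel s w hworth j
  have ht0 : ∀ j, 0 ≤ t j := fun j => Finset.sum_nonneg fun l _ => sq_nonneg _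
  have hsum_t : ∑ j, t j = (s.card : ℝ) := by
    rw [htdef]
    simp only []
    rw [Finset.sum_comm]
    have : ∀ l ∈ s, ∑ j, w l j ^ 2 = 1 := by
      intro l hl
      have := hworth l hl l hl
      simp at this
      rw [← this, dotProduct]
      exact Finset.sum_congr rfl fun j _ => (sq (w l j)) ▸ by ring
    rw [Finset.sum_congr rfl this]
    simp
  set θ := sv Y (r-1) ^ 2 with hθdef
  have hθ0 : 0 ≤ θ := sq_nonneg _
  have key1 : ∑ j, lam j * t j ≤ (∑ j, max (lam j - θ) 0) + θ * s.card := by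
    have per : ∀ j, lam j * t j ≤ max (lam j - θ) 0 + θ * t j := by
      intro j
      have h1 : lam j * t j = t j * (lam j - θ) + θ * t j := by ring
      rw [h1]
      gcongr ?_ + ?_
      · rcases le_or_gt θ (lam j) with h | h
        · calc t j * (lam j - θ) ≤ 1 * (lam j - θ) := by
                have := ht1 j; nlinarith
            _ ≤ max (lam j - θ) 0 := by rw [one_mul]; exact le_max_left _ _
        · calc t j * (lam j - θ) ≤ 0 := mul_nonpos_of_nonneg_of_nonpos (ht0 j) (by linarith)
            _ ≤ max (lam j - θ) 0 := le_max_right _ _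
      · exact le_refl _
    calc ∑ j, lam j * t j ≤ ∑ j, (max (lam j - θ) 0 + θ * t j) := Finset.sum_le_sum fun j _ => per j
      _ = (∑ j, max (lam j - θ) 0) + θ * ∑ j, t j := by
          rw [Finset.sum_add_distrib, Finset.mul_sum]
      _ = _ := by rw [hsum_t]
  have key2 : ∑ j, max (lam j - θ) 0 = ∑ i ∈ Finset.range r, (sv Y i ^ 2 - θ) := by
    have e0 : ∑ j, max (lam j - θ) 0
        = ∑ i ∈ Finset.range m, max (sv Y i ^ 2 - θ) 0 := by
      rw [sum_f_sv Y (fun x => max (x ^ 2 - θ) 0)]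
      exact (Finset.sum_congr rfl fun j _ => by
        rw [Real.sq_sqrt (eig_nonneg Y j)]; rfl).symm
    rw [e0]
    rw [← Finset.sum_subset (Finset.range_subset_range.mpr hrm)
      (fun i _ hi => ?_)]
    · refine Finset.sum_congr rfl fun i hi => ?_
      rw [Finset.mem_range] at hi
      have h1 : sv Y (r-1) ≤ sv Y i := sv_anti Y (by omega)
      have h2 : θ ≤ sv Y i ^ 2 := by
        rw [hθdef]
        exact pow_le_pow_left₀ (sv_nonneg Y (r-1)) h1 2
      exact max_eq_left (by linarith)
    · rw [Finset.mem_range, not_lt] at hi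
      have h1 : sv Y i ≤ sv Y (r-1) := sv_anti Y (by omega)
      have h2 : sv Y i ^ 2 ≤ θ := by
        rw [hθdef]
        exact pow_le_pow_left₀ (sv_nonneg Y i) h1 2
      exact max_eq_right (by linarith)
  have hcard : θ * s.card ≤ θ * r := by
    have : (s.card : ℝ) ≤ r := by exact_mod_cast hs
    nlinarith
  have key3 : ∑ i ∈ Finset.range r, (sv Y i ^ 2 - θ) = (∑ i ∈ Finset.range r, sv Y i ^ 2) - r * θ := by
    rw [Finset.sum_sub_distrib]
    simp [Finset.card_range, mul_comm]
  calc ∑ l ∈ s, ∑ i, (Y *ᵥ v l) i ^ 2 = ∑ j, lam j * t j := step1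
    _ ≤ (∑ j, max (lam j - θ) 0) + θ * s.card := key1
    _ ≤ (∑ j, max (lam j - θ) 0) + θ * r := by linarith
    _ = (∑ i ∈ Finset.range r, sv Y i ^ 2) - r * θ + θ * r := by rw [key2, key3]
    _ = ∑ i ∈ Finset.range r, sv Y i ^ 2 := by ring

end lemK


section stepB
variable {n m : ℕ}

lemma bidot (Z Y : Matrix (Fin n) (Fin m) ℝ) (x w : Fin m → ℝ) :
    (Z *ᵥ x) ⬝ᵥ (Y *ᵥ w) = ((Yᵀ * Z) *ᵥ x) ⬝ᵥ w := by
  rw [dotProduct_mulVec]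
  congr 1
  rw [show Y = (Yᵀ)ᵀ from (Matrix.transpose_transpose Y).symm, Matrix.vecMul_transpose,
    Matrix.mulVec_mulVec, Matrix.transpose_transpose]

lemma trace_sum_dot (B : Matrix (Fin m) (Fin m) ℝ) (Q : Matrix (Fin m) (Fin m) ℝ)
    (hQ : Q * star Q = 1) :
    ∑ j, (B *ᵥ (fun i => Q i j)) ⬝ᵥ (fun i => Q i j) = ∑ a, B a a := by
  simp only [Matrix.mulVec, dotProduct]
  have e1 : ∀ j, ∑ a, (∑ b, B a b * Q b j) * Q a j
      = ∑ a, ∑ b, B a b * Q b j * Q a j := by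
    intro j
    exact Finset.sum_congr rfl fun a _ => by rw [Finset.sum_mul]
  rw [Finset.sum_congr rfl fun j _ => e1 j]
  rw [Finset.sum_comm]
  have e2 : ∀ a, ∑ j, ∑ b, B a b * Q b j * Q a j = ∑ b, B a b * ∑ j, Q b j * Q a j := by
    intro a
    rw [Finset.sum_comm]
    refine Finset.sum_congr rfl fun b _ => ?_
    rw [Finset.mul_sum]
    exact Finset.sum_congr rfl fun j _ => by ring
  rw [Finset.sum_congr rfl fun a _ => e2 a]
  have e3 : ∀ a b, ∑ j, Q b j * Q a j = if b = a then 1 else 0 := by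
    intro a b
    have := congrFun (congrFun hQ b) a
    simp only [Matrix.mul_apply, Matrix.star_apply, star_trivial, Matrix.one_apply] at this
    exact this
  refine Finset.sum_congr rfl fun a _ => ?_
  rw [Finset.sum_congr rfl fun b _ => by rw [e3 a b]]
  simp only [mul_ite, mul_one, mul_zero]
  rw [Finset.sum_ite_eq' Finset.univ a (fun b => B a b)]
  simp

lemma lowRankFro_le_fro {r : ℕ} (hr1 : 1 ≤ r) (hrm : r ≤ m)
    (Z : Matrix (Fin n) (Fin m) ℝ) (hZ : Z.rank ≤ r) :
    lowRankFro r Z ≤ fro Z := by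
  rw [lowRankFro, dualNorm]
  apply Real.sSup_le _ (fro_nonneg Z)
  rintro c ⟨Y, hY, rfl⟩
  set lam := lamY Z with hlam
  set Q := QY Z with hQdef
  set q : Fin m → Fin m → ℝ := fun j => fun i => Q i j with hqdef
  have hQ1 : star Q * Q = 1 := QY_unit1 Z
  have hQ2 : Q * star Q = 1 := QY_unit2 Z
  have hq_orth : ∀ a ∈ (Finset.univ : Finset (Fin m)), ∀ b ∈ (Finset.univ : Finset (Fin m)),
      q a ⬝ᵥ q b = if a = b then 1 else 0 := by
    intro a _ b _
    have := congrFun (congrFun hQ1 a) b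
    simp only [Matrix.mul_apply, Matrix.star_apply, star_trivial, Matrix.one_apply] at this
    rw [← this]
    simp [hqdef, dotProduct]
  have hq_single : ∀ j, q j = Q *ᵥ (Pi.single j 1 : Fin m → ℝ) := by
    intro j; funext i
    simp [hqdef, Matrix.mulVec, dotProduct_single]
  have heig : ∀ j, (Zᴴ * Z) *ᵥ q j = lam j • q j := by
    intro j
    have hst : Zᴴ * Z = Q * Matrix.diagonal lam * star Q := by
      rw [(Matrix.isHermitian_transpose_mul_self Z).spectral_theorem, Unitary.conjStarAlgAut_apply]; rfl
    rw [hst, hq_single j]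
    have hstep : (Q * Matrix.diagonal lam * star Q) *ᵥ (Q *ᵥ (Pi.single j 1 : Fin m → ℝ))
        = (Q * Matrix.diagonal lam * (star Q * Q)) *ᵥ (Pi.single j 1 : Fin m → ℝ) := by
      rw [Matrix.mulVec_mulVec, Matrix.mul_assoc (Q * Matrix.diagonal lam) (star Q) Q]
    rw [hstep, hQ1, Matrix.mul_one, ← Matrix.mulVec_mulVec]
    have hD : Matrix.diagonal lam *ᵥ (Pi.single j 1 : Fin m → ℝ) = lam j • (Pi.single j 1 : Fin m → ℝ) := by
      funext x
      rw [Matrix.mulVec_diagonal]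
      simp [Pi.single_apply]
      by_cases hx : x = j <;> simp [hx]
    rw [hD, Matrix.mulVec_smul]
  have hZq_norm : ∀ j, ∑ i, (Z *ᵥ q j) i ^ 2 = lam j := by
    intro j
    rw [quad_core, heig j, dotProduct_smul]
    have := hq_orth j (Finset.mem_univ j) j (Finset.mem_univ j)
    simp only [if_pos rfl] at this
    rw [this]
    simp
  have hZq0 : ∀ j, lam j = 0 → Z *ᵥ q j = 0 := by
    intro j hj
    have h0 : ∑ i, (Z *ᵥ q j) i ^ 2 = 0 := by rw [hZq_norm j, hj]
    funext i
    have := (Finset.sum_eq_zero_iff_of_nonneg (fun i _ => sq_nonneg _)).mp h0 i (Finset.mem_univ i)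
    simpa using pow_eq_zero_iff (n := 2) (by norm_num) |>.mp this
  set supp := Finset.univ.filter (fun j => lam j ≠ 0) with hsupp
  have hcard : supp.card ≤ r := by
    have h1 : Z.rank = Fintype.card {j // lam j ≠ 0} := by
      have h2 := (Matrix.isHermitian_transpose_mul_self Z).rank_eq_card_non_zero_eigs
      have h3 : (Zᴴ * Z).rank = Z.rank := by
        rw [Matrix.conjTranspose_eq_transpose_of_trivial, Matrix.rank_transpose_mul_self]
      rw [← h3, h2]
      rfl
    rw [hsupp, ← Fintype.card_subtype]
    omega
  have hip : ip Z Y = ∑ j ∈ supp, (Z *ᵥ q j) ⬝ᵥ (Y *ᵥ q j) := by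
    have h1 : ip Z Y = ∑ j, (Z *ᵥ q j) ⬝ᵥ (Y *ᵥ q j) := by
      rw [Finset.sum_congr rfl fun j _ => bidot Z Y (q j) (q j)]
      rw [trace_sum_dot (Yᵀ * Z) Q hQ2]
      rw [ip]
      rw [Finset.sum_comm]
      refine Finset.sum_congr rfl fun a _ => ?_
      simp only [Matrix.mul_apply, Matrix.transpose_apply]
      exact Finset.sum_congr rfl fun i _ => by ring
    rw [h1]
    symm
    apply Finset.sum_subset (Finset.subset_univ supp)
    intro j _ hj
    rw [hsupp] at hj
    simp only [Finset.mem_filter, Finset.mem_univ, true_and, not_not] at hj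
    rw [hZq0 j hj]
    simp
  have hcs : ip Z Y ≤ Real.sqrt (∑ j ∈ supp, ∑ i, (Z *ᵥ q j) i ^ 2) *
      Real.sqrt (∑ j ∈ supp, ∑ i, (Y *ᵥ q j) i ^ 2) := by
    rw [hip]
    have h := cs_sum (supp ×ˢ Finset.univ)
      (fun p => (Z *ᵥ q p.1) p.2) (fun p => (Y *ᵥ q p.1) p.2)
    rw [Finset.sum_product, Finset.sum_product, Finset.sum_product] at h
    exact le_trans (le_of_eq (Finset.sum_congr rfl fun j _ => rfl)) h
  have hZside : ∑ j ∈ supp, ∑ i, (Z *ᵥ q j) i ^ 2 = fro Z ^ 2 := by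
    rw [Finset.sum_congr rfl fun j _ => hZq_norm j]
    have h1 : ∑ j ∈ supp, lam j = ∑ j, lam j := by
      apply Finset.sum_subset (Finset.subset_univ supp)
      intro j _ hj
      rw [hsupp] at hj
      simp only [Finset.mem_filter, Finset.mem_univ, true_and, not_not] at hj
      exact hj
    rw [h1, hlam]
    rw [fro_sq]
    exact sum_eig_eq Z
  have hYside : ∑ j ∈ supp, ∑ i, (Y *ᵥ q j) i ^ 2 ≤ 1 := by
    have h1 := lemK hr1 hrm Y supp q (fun a ha b hb => hq_orth a (Finset.mem_univ a) b (Finset.mem_univ b)) hcard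
    have h2 : ∑ i ∈ Finset.range r, sv Y i ^ 2 = truncFro r Y ^ 2 := (truncFro_sq Y r).symm
    have h3 : truncFro r Y ^ 2 ≤ 1 := by
      nlinarith [truncFro_nonneg Y r]
    linarith
  calc ip Z Y ≤ Real.sqrt (∑ j ∈ supp, ∑ i, (Z *ᵥ q j) i ^ 2) *
      Real.sqrt (∑ j ∈ supp, ∑ i, (Y *ᵥ q j) i ^ 2) := hcs
    _ ≤ Real.sqrt (fro Z ^ 2) * Real.sqrt 1 :=
        mul_le_mul (Real.sqrt_le_sqrt (le_of_eq hZside)) (Real.sqrt_le_sqrt hYside)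
          (Real.sqrt_nonneg _) (Real.sqrt_nonneg _)
    _ = fro Z := by rw [Real.sqrt_one, Real.sqrt_sq (fro_nonneg Z), mul_one]

end stepB

/-- for `g = ½‖·‖_{F,r*}²`, any `γ > 0` and any `Z` with `rank Z ≤ r`,
`prox_{γg}((1+γ) Z) = Z`, i.e. `Z` is the unique minimizer of
`M ↦ g(M) + (1/(2γ))‖M − (1+γ)Z‖_F²`. -/
theorem prox_lowRankFro_of_rank_le {n m r : ℕ} (hr1 : 1 ≤ r) (hr2 : r ≤ min n m)
    (γ : ℝ) (hγ : 0 < γ) (Z : Matrix (Fin n) (Fin m) ℝ) (hZ : Z.rank ≤ r) :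
    (∀ M : Matrix (Fin n) (Fin m) ℝ,
      2⁻¹ * lowRankFro r Z ^ 2 + (2 * γ)⁻¹ * fro (Z - (1 + γ) • Z) ^ 2 ≤
      2⁻¹ * lowRankFro r M ^ 2 + (2 * γ)⁻¹ * fro (M - (1 + γ) • Z) ^ 2) ∧
    (∀ M : Matrix (Fin n) (Fin m) ℝ,
      2⁻¹ * lowRankFro r M ^ 2 + (2 * γ)⁻¹ * fro (M - (1 + γ) • Z) ^ 2 =
      2⁻¹ * lowRankFro r Z ^ 2 + (2 * γ)⁻¹ * fro (Z - (1 + γ) • Z) ^ 2 → M = Z) := by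
  have hγ' : γ ≠ 0 := hγ.ne'
  have hrm : r ≤ m := le_trans hr2 (Nat.min_le_right n m)
  have hNZ : lowRankFro r Z = fro Z :=
    le_antisymm (lowRankFro_le_fro hr1 hrm Z hZ) (fro_le_lowRankFro hr1 Z)
  have key : ∀ M : Matrix (Fin n) (Fin m) ℝ,
      2⁻¹ * fro M ^ 2 + (2 * γ)⁻¹ * fro (M - (1 + γ) • Z) ^ 2
      = (1 + γ) / (2 * γ) * fro (M - Z) ^ 2 + 2⁻¹ * (1 + γ) * fro Z ^ 2 := by
    intro M
    rw [fro_sq, fro_sq, fro_sq, fro_sq]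
    simp only [Finset.mul_sum]
    rw [← Finset.sum_add_distrib, ← Finset.sum_add_distrib]
    refine Finset.sum_congr rfl fun i _ => ?_
    rw [← Finset.sum_add_distrib, ← Finset.sum_add_distrib]
    refine Finset.sum_congr rfl fun j _ => ?_
    simp only [Matrix.sub_apply, Matrix.smul_apply, smul_eq_mul]
    field_simp
    ring
  have hfZ : fro (Z - (1 + γ) • Z) ^ 2 = γ ^ 2 * fro Z ^ 2 := by
    rw [fro_sq, fro_sq]
    simp only [Finset.mul_sum]
    refine Finset.sum_congr rfl fun i _ => ?_
    refine Finset.sum_congr rfl fun j _ => ?_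
    simp only [Matrix.sub_apply, Matrix.smul_apply, smul_eq_mul]
    ring
  have h4 : 2⁻¹ * lowRankFro r Z ^ 2 + (2 * γ)⁻¹ * fro (Z - (1 + γ) • Z) ^ 2
      = 2⁻¹ * (1 + γ) * fro Z ^ 2 := by
    rw [hNZ, hfZ]
    field_simp
  have main_ineq : ∀ M : Matrix (Fin n) (Fin m) ℝ,
      2⁻¹ * lowRankFro r Z ^ 2 + (2 * γ)⁻¹ * fro (Z - (1 + γ) • Z) ^ 2
        + (1 + γ) / (2 * γ) * fro (M - Z) ^ 2
      ≤ 2⁻¹ * lowRankFro r M ^ 2 + (2 * γ)⁻¹ * fro (M - (1 + γ) • Z) ^ 2 := by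
    intro M
    have h1 : fro M ≤ lowRankFro r M := fro_le_lowRankFro hr1 M
    have h2 : fro M ^ 2 ≤ lowRankFro r M ^ 2 := pow_le_pow_left₀ (fro_nonneg M) h1 2
    have h3 := key M
    rw [h4]
    linarith
  refine ⟨fun M => ?_, fun M hM => ?_⟩
  · have := main_ineq M
    have h5 : 0 ≤ (1 + γ) / (2 * γ) * fro (M - Z) ^ 2 := by positivity
    linarith
  · have h6 := main_ineq M
    rw [hM] at h6
    have h7 : (1 + γ) / (2 * γ) * fro (M - Z) ^ 2 ≤ 0 := by linarith
    have h8 : 0 < (1 + γ) / (2 * γ) := by positivity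
    have h9 : fro (M - Z) ^ 2 ≤ 0 := by
      by_contra h
      push_neg at h
      nlinarith
    have h10 : fro (M - Z) = 0 := by
      have := sq_nonneg (fro (M - Z))
      nlinarith [fro_nonneg (M - Z)]
    have h11 : M - Z = 0 := fro_eq_zero _ h10
    ext i j
    have := congrFun (congrFun h11 i) j
    simpa [Matrix.sub_apply, sub_eq_zero] using this
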